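/- arXiv:1804.07104 — 2 statements merged into one kernel-verified Lean document; each statement's English description precedes it below -/
import Mathlib

section
/- For every n ≥ 2, every Hamiltonian prime set of the prime sum graph G_{2n} has at least 3 elements. That is, if H is a set of primes less than 4n such that the union over p in H of the edge sets E_p = { {u, v} : u, v ∈ {1,...,2n}, u ≠ v, u + v = p } contains a Hamilton cycle of G_{2n}, then |H| ≥ 3. -/
/-- The prime sum graph of order `m`: vertices are `{1, ..., m}`, and two distinct
vertices are adjacent iff their sum is prime. -/
def primeSumGraph (m : ℕ) : SimpleGraph (Finset.Icc 1 m) where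
  Adj i j := i ≠ j ∧ Nat.Prime (i.1 + j.1)
  symm := by
    refine ⟨?_⟩
    rintro i j ⟨h1, h2⟩
    exact ⟨h1.symm, by rwa [Nat.add_comm]⟩
  loopless := by refine ⟨?_⟩; rintro i ⟨h, _⟩; exact h rfl

/-- Every vertex of a cycle has two distinct neighbours along the cycle. -/
lemma cycle_two_neighbors {V : Type*} {G : SimpleGraph V} {v : V} {q : G.Walk v v}
    (hq : q.IsCycle) :
    ∃ u₁ u₂ : V, u₁ ≠ u₂ ∧ s(v, u₁) ∈ q.edges ∧ s(v, u₂) ∈ q.edges := by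
  cases q with
  | nil => exact absurd rfl hq.ne_nil
  | @cons _ u₁ _ h q' =>
    rw [SimpleGraph.Walk.cons_isCycle_iff] at hq
    obtain ⟨u₂, h₂, r, hr⟩ := SimpleGraph.Walk.exists_eq_cons_of_ne h.ne q'.reverse
    refine ⟨u₁, u₂, ?_, ?_, ?_⟩
    · rintro rfl
      have : s(v, u₁) ∈ q'.reverse.edges := by
        rw [hr, SimpleGraph.Walk.edges_cons]; exact List.mem_cons_self
      rw [SimpleGraph.Walk.edges_reverse, List.mem_reverse] at this
      exact hq.2 this
    · rw [SimpleGraph.Walk.edges_cons]; exact List.mem_cons_self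
    · have : s(v, u₂) ∈ q'.reverse.edges := by
        rw [hr, SimpleGraph.Walk.edges_cons]; exact List.mem_cons_self
      rw [SimpleGraph.Walk.edges_reverse, List.mem_reverse] at this
      rw [SimpleGraph.Walk.edges_cons]
      exact List.mem_cons_of_mem _ this

/-- Every vertex of a closed walk that is a cycle has two distinct neighbours,
stated for any vertex on the support. -/
lemma cycle_two_neighbors' {V : Type*} [DecidableEq V] {G : SimpleGraph V} {a : V}
    {p : G.Walk a a} (hp : p.IsCycle) {v : V} (hv : v ∈ p.support) :
    ∃ u₁ u₂ : V, u₁ ≠ u₂ ∧ s(v, u₁) ∈ p.edges ∧ s(v, u₂) ∈ p.edges := by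
  obtain ⟨u₁, u₂, hne, h1, h2⟩ := cycle_two_neighbors (hp.rotate hv)
  rw [(p.rotate_edges v hv).mem_iff] at h1 h2
  exact ⟨u₁, u₂, hne, h1, h2⟩

/-- Every Hamiltonian prime set of `G_{2n}` has at least 3 elements: if `H` is a
set of primes less than `4n` such that some Hamilton cycle of `G_{2n}` uses only
edges whose endpoint sums lie in `H`, then `|H| ≥ 3`. -/
theorem hamiltonian_prime_set_card_ge_three (n : ℕ) (hn : 2 ≤ n) (H : Finset ℕ)
    (hH : ∀ p ∈ H, Nat.Prime p ∧ p < 4 * n)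
    (hham : ∃ a, ∃ w : (primeSumGraph (2 * n)).Walk a a, w.IsHamiltonianCycle ∧
      ∀ u v : Finset.Icc 1 (2 * n), s(u, v) ∈ w.edges → u.1 + v.1 ∈ H) :
    3 ≤ H.card := by
  obtain ⟨a, w, hw, hedges⟩ := hham
  have hmem1 : (1 : ℕ) ∈ Finset.Icc 1 (2 * n) := by
    rw [Finset.mem_Icc]; omega
  have hmem2 : (2 * n : ℕ) ∈ Finset.Icc 1 (2 * n) := by
    rw [Finset.mem_Icc]; omega
  set x₁ : Finset.Icc 1 (2 * n) := ⟨1, hmem1⟩ with hx₁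
  set x₂ : Finset.Icc 1 (2 * n) := ⟨2 * n, hmem2⟩ with hx₂
  obtain ⟨a₁, b₁, hab₁, ha₁, hb₁⟩ :=
    cycle_two_neighbors' hw.isCycle (hw.mem_support x₁)
  obtain ⟨a₂, b₂, hab₂, ha₂, hb₂⟩ :=
    cycle_two_neighbors' hw.isCycle (hw.mem_support x₂)
  have hs1 : 1 + a₁.1 ∈ H := hedges x₁ a₁ ha₁
  have hs2 : 1 + b₁.1 ∈ H := hedges x₁ b₁ hb₁
  have ht1 : 2 * n + a₂.1 ∈ H := hedges x₂ a₂ ha₂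
  have ht2 : 2 * n + b₂.1 ∈ H := hedges x₂ b₂ hb₂
  have hval₁ : a₁.1 ≠ b₁.1 := fun h => hab₁ (Subtype.ext h)
  have hval₂ : a₂.1 ≠ b₂.1 := fun h => hab₂ (Subtype.ext h)
  have hb₁le : a₁.1 ≤ 2 * n := (Finset.mem_Icc.mp a₁.2).2
  have hb₂le : b₁.1 ≤ 2 * n := (Finset.mem_Icc.mp b₁.2).2
  have ha₂ge : 1 ≤ a₂.1 := (Finset.mem_Icc.mp a₂.2).1
  have hb₂ge : 1 ≤ b₂.1 := (Finset.mem_Icc.mp b₂.2).1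
  by_contra hcard
  push_neg at hcard
  have hsub : {1 + a₁.1, 1 + b₁.1} ⊆ H := by
    intro x hx
    simp only [Finset.mem_insert, Finset.mem_singleton] at hx
    rcases hx with rfl | rfl <;> assumption
  have hpairc : ({1 + a₁.1, 1 + b₁.1} : Finset ℕ).card = 2 := by
    rw [Finset.card_insert_of_notMem (by simp [hval₁]), Finset.card_singleton]
  have hHeq : H = {1 + a₁.1, 1 + b₁.1} :=
    (Finset.eq_of_subset_of_card_le hsub (by omega)).symm
  rw [hHeq] at ht1 ht2
  simp only [Finset.mem_insert, Finset.mem_singleton] at ht1 ht2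
  omega
end

section
/- If there are infinitely many primes p with p ≡ 1 (mod 12) such that p + 12 is also prime, then there are infinitely many positive integers n (namely n = (p − 11)/2 ranging over such primes p > 23) such that the prime sum graph G_{2n} contains a Hamilton cycle whose adjacent-vertex sums all lie in {11, 23, p, p + 12}. -/
namespace PSGHelper

open SimpleGraph

/-- The cycle sequence in `ZMod (2n)`. -/
def zf (n t : ℕ) : ZMod (2 * n) :=
  if t % 2 = 0 then 1 + 6 * (t : ZMod (2 * n)) else 16 - 6 * (t : ZMod (2 * n))

/-- Label in `{1, ..., 2n}` of an element of `ZMod (2n)`. -/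
def lab (n : ℕ) (x : ZMod (2 * n)) : ℕ := if x = 0 then 2 * n else x.val

lemma lab_mem {n : ℕ} (hn : 0 < n) (x : ZMod (2 * n)) :
    lab n x ∈ Finset.Icc 1 (2 * n) := by
  haveI : NeZero (2 * n) := ⟨by omega⟩
  rw [Finset.mem_Icc, lab]
  split
  · omega
  · rename_i hx
    have h1 : x.val ≠ 0 := fun h => hx ((ZMod.val_eq_zero x).mp h)
    have h2 : x.val < 2 * n := ZMod.val_lt x
    omega

lemma lab_cast {n : ℕ} (hn : 0 < n) (x : ZMod (2 * n)) :
    ((lab n x : ℕ) : ZMod (2 * n)) = x := by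
  haveI : NeZero (2 * n) := ⟨by omega⟩
  rw [lab]
  split
  · rename_i hx; rw [hx, ZMod.natCast_self]
  · exact ZMod.natCast_rightInverse x

lemma lab_inj {n : ℕ} (hn : 0 < n) : Function.Injective (lab n) := by
  intro x y hxy
  rw [← lab_cast hn x, ← lab_cast hn y, hxy]

/-- The vertices of the cycle. -/
def vert (n : ℕ) (hn : 0 < n) (t : ℕ) : (Finset.Icc 1 (2 * n)) :=
  ⟨lab n (zf n t), lab_mem hn _⟩

/-- Parity homomorphism. -/
def par (n : ℕ) : ZMod (2 * n) →+* ZMod 2 :=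
  ZMod.castHom (dvd_mul_right 2 n) (ZMod 2)

lemma par_zf (n t : ℕ) : par n (zf n t) = if t % 2 = 0 then 1 else 0 := by
  have h6 : (par n) 6 = 0 := by
    have : (6 : ZMod (2 * n)) = ((6 : ℕ) : ZMod (2 * n)) := by norm_num
    rw [this, map_natCast]; decide
  rw [zf]
  split
  · rw [map_add, map_mul, map_one, map_natCast, h6, zero_mul, add_zero]
  · have h16 : (par n) 16 = 0 := by
      have : (16 : ZMod (2 * n)) = ((16 : ℕ) : ZMod (2 * n)) := by norm_num
      rw [this, map_natCast]; decide
    rw [map_sub, map_mul, map_natCast, h6, h16, zero_mul, sub_zero]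

lemma zf_ne_succ (n t : ℕ) : zf n t ≠ zf n (t + 1) := by
  intro h
  have := congrArg (par n) h
  rw [par_zf, par_zf] at this
  rcases Nat.even_or_odd t with he | ho
  · have h1 : t % 2 = 0 := Nat.even_iff.mp he
    have h2 : (t + 1) % 2 = 1 := by omega
    simp [h1, h2] at this
  · have h1 : t % 2 = 1 := Nat.odd_iff.mp ho
    have h2 : (t + 1) % 2 = 0 := by omega
    simp [h1, h2] at this

lemma sum_zf (n t : ℕ) :
    zf n t + zf n (t + 1) = if t % 2 = 0 then (11 : ZMod (2 * n)) else 23 := by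
  rcases Nat.even_or_odd t with he | ho
  · have h1 : t % 2 = 0 := Nat.even_iff.mp he
    rw [zf, zf, if_pos h1, if_neg (by omega), if_pos h1]
    push_cast
    ring
  · have h1 : t % 2 = 1 := Nat.odd_iff.mp ho
    rw [zf, zf, if_neg (by omega), if_pos (by omega), if_neg (by omega)]
    push_cast
    ring

lemma sum_lab {n : ℕ} (h13 : 13 ≤ n) (t : ℕ) :
    lab n (zf n t) + lab n (zf n (t + 1)) ∈ ({11, 23, 2 * n + 11, 2 * n + 23} : Set ℕ) := by
  have hn : 0 < n := by omega
  set c : ℕ := if t % 2 = 0 then 11 else 23 with hc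
  have hcval : c = 11 ∨ c = 23 := by by_cases h : t % 2 = 0 <;> simp [hc, h]
  have hc11 : 11 ≤ c := by rcases hcval with h | h <;> omega
  have hclt : c < 2 * n := by rcases hcval with h | h <;> omega
  have hcast : ((lab n (zf n t) + lab n (zf n (t + 1)) : ℕ) : ZMod (2 * n))
      = ((c : ℕ) : ZMod (2 * n)) := by
    push_cast
    rw [lab_cast hn, lab_cast hn, sum_zf]
    by_cases h : t % 2 = 0
    · rw [if_pos h, hc, if_pos h]; norm_num
    · rw [if_neg h, hc, if_neg h]; norm_num
  rw [ZMod.natCast_eq_natCast_iff', Nat.mod_eq_of_lt hclt] at hcast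
  set a := lab n (zf n t) + lab n (zf n (t + 1)) with ha
  have hb1 := Finset.mem_Icc.mp (lab_mem hn (zf n t))
  have hb2 := Finset.mem_Icc.mp (lab_mem hn (zf n (t + 1)))
  have hale : a ≤ 4 * n := by omega
  have hdm := Nat.div_add_mod a (2 * n)
  rw [hcast] at hdm
  have hk : a / (2 * n) ≤ 1 := by
    by_contra hh
    push_neg at hh
    have h2 : 2 * n * 2 ≤ 2 * n * (a / (2 * n)) := Nat.mul_le_mul_left _ hh
    omega
  have hor : a = c ∨ a = 2 * n + c := by
    interval_cases h : a / (2 * n) <;> omega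
  simp only [Set.mem_insert_iff, Set.mem_singleton_iff]
  rcases hor with h | h <;> rcases hcval with h' | h' <;> omega

lemma zf_inj {n : ℕ} (h6 : n % 6 = 1) {s t : ℕ} (hs : s < 2 * n) (ht : t < 2 * n)
    (h : zf n s = zf n t) : s = t := by
  have hn : 0 < n := by omega
  have hpar : s % 2 = t % 2 := by
    have := congrArg (par n) h
    rw [par_zf, par_zf] at this
    by_contra hne
    rcases Nat.lt_or_ge (s % 2) 1 with h1 | h1
    · have hs0 : s % 2 = 0 := by omega
      have ht1 : t % 2 = 1 := by omega
      rw [if_pos hs0, if_neg (by omega)] at this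
      exact one_ne_zero this
    · have hs1 : s % 2 = 1 := by omega
      have ht0 : t % 2 = 0 := by omega
      rw [if_neg (by omega), if_pos ht0] at this
      exact one_ne_zero this.symm
  have h66 : (6 : ZMod (2 * n)) * (s : ZMod (2 * n)) = 6 * (t : ZMod (2 * n)) := by
    rw [zf, zf] at h
    rcases Nat.decEq (s % 2) 0 with h2 | h2
    · rw [if_neg h2, if_neg (by omega)] at h
      linear_combination -h
    · rw [if_pos h2, if_pos (by omega)] at h
      linear_combination h
  have hmod : (6 * s) % (2 * n) = (6 * t) % (2 * n) := by
    rw [← ZMod.natCast_eq_natCast_iff']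
    push_cast
    exact h66
  have key : ∀ s t : ℕ, s ≤ t → s < 2 * n → t < 2 * n → s % 2 = t % 2 →
      (6 * s) % (2 * n) = (6 * t) % (2 * n) → s = t := by
    intro s t hle hs ht hpar hmod
    have hdvd : 2 * n ∣ 6 * t - 6 * s := (Nat.modEq_iff_dvd' (by omega)).mp hmod
    obtain ⟨k, hk⟩ := hdvd
    rw [mul_assoc] at hk
    have hnd : n ∣ 3 * (t - s) := ⟨k, by omega⟩
    have hcop3 : Nat.Coprime 3 n := (Nat.prime_three.coprime_iff_not_dvd).mpr (by omega)
    have hnd2 : n ∣ t - s := Nat.Coprime.dvd_of_dvd_mul_left hcop3.symm hnd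
    have h2d : 2 ∣ t - s := by omega
    have hcop2 : Nat.Coprime 2 n := (Nat.prime_two.coprime_iff_not_dvd).mpr (by omega)
    have hdd : 2 * n ∣ t - s := Nat.Coprime.mul_dvd_of_dvd_of_dvd hcop2 h2d hnd2
    have h0 : t - s = 0 := Nat.eq_zero_of_dvd_of_lt hdd (by omega)
    omega
  rcases le_total s t with hle | hle
  · exact key s t hle hs ht hpar hmod
  · exact (key t s hle ht hs hpar.symm hmod.symm).symm

lemma vert_inj {n : ℕ} (h6 : n % 6 = 1) {s t : ℕ} (hs : s < 2 * n) (ht : t < 2 * n)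
    (h : vert n (by omega) s = vert n (by omega) t) : s = t := by
  have hn : 0 < n := by omega
  rw [vert, vert, Subtype.mk.injEq] at h
  exact zf_inj h6 hs ht (lab_inj hn h)

lemma vert_period {n : ℕ} (hn : 0 < n) : vert n hn (2 * n) = vert n hn 0 := by
  rw [vert, vert, Subtype.mk.injEq]
  congr 1
  rw [zf, zf, if_pos (by omega), if_pos (by omega)]
  norm_num [ZMod.natCast_self]

lemma vert_surj {n : ℕ} (h6 : n % 6 = 1) (a : (Finset.Icc 1 (2 * n))) :
    ∃ t, t < 2 * n ∧ vert n (by omega) t = a := by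
  have hn : 0 < n := by omega
  classical
  set F := Finset.image (fun t => vert n hn t) (Finset.range (2 * n)) with hF
  have hcard : F.card = 2 * n := by
    rw [hF, Finset.card_image_of_injOn, Finset.card_range]
    intro s hs t ht hst
    exact vert_inj h6 (Finset.mem_range.mp hs) (Finset.mem_range.mp ht) hst
  have huniv : F = Finset.univ := by
    apply Finset.eq_univ_of_card
    rw [hcard, Fintype.card_coe, Nat.card_Icc]
    omega
  have : a ∈ F := by rw [huniv]; exact Finset.mem_univ a
  obtain ⟨t, htm, hteq⟩ := Finset.mem_image.mp this
  exact ⟨t, Finset.mem_range.mp htm, hteq⟩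

lemma adj {n : ℕ} (h13 : 13 ≤ n) (hp : Nat.Prime (2 * n + 11)) (hq : Nat.Prime (2 * n + 23))
    (t : ℕ) : (primeSumGraph (2 * n)).Adj (vert n (by omega) t) (vert n (by omega) (t + 1)) := by
  have hn : 0 < n := by omega
  constructor
  · intro h
    rw [vert, vert, Subtype.mk.injEq] at h
    exact zf_ne_succ n t (lab_inj hn h)
  · have hmem := sum_lab h13 t
    simp only [Set.mem_insert_iff, Set.mem_singleton_iff] at hmem
    show Nat.Prime (lab n (zf n t) + lab n (zf n (t + 1)))
    rcases hmem with h | h | h | h <;> rw [h]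
    · norm_num
    · norm_num
    · exact hp
    · exact hq

/-- The walk of length `k` starting at step `t`. -/
def wAux {n : ℕ} (h13 : 13 ≤ n) (hp : Nat.Prime (2 * n + 11)) (hq : Nat.Prime (2 * n + 23)) :
    (k t : ℕ) → (primeSumGraph (2 * n)).Walk (vert n (by omega) t) (vert n (by omega) (t + k))
  | 0, _ => SimpleGraph.Walk.nil
  | k + 1, t =>
    SimpleGraph.Walk.cons (adj h13 hp hq t)
      ((wAux h13 hp hq k (t + 1)).copy rfl (congrArg (vert n (by omega)) (by omega)))

lemma support_wAux {n : ℕ} (h13 : 13 ≤ n) (hp : Nat.Prime (2 * n + 11))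
    (hq : Nat.Prime (2 * n + 23)) :
    ∀ k t, (wAux h13 hp hq k t).support
      = (List.range (k + 1)).map (fun i => vert n (by omega) (t + i)) := by
  intro k
  induction k with
  | zero => intro t; simp [wAux, List.range_succ]
  | succ k ih =>
    intro t
    rw [wAux, SimpleGraph.Walk.support_cons, SimpleGraph.Walk.support_copy, ih]
    rw [List.range_succ_eq_map (n := k + 1), List.map_cons, List.map_map]
    congr 1
    apply List.map_congr_left
    intro i _
    simp only [Function.comp_apply]
    exact congrArg _ (by omega)

lemma edges_wAux {n : ℕ} (h13 : 13 ≤ n) (hp : Nat.Prime (2 * n + 11))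
    (hq : Nat.Prime (2 * n + 23)) :
    ∀ k t, (wAux h13 hp hq k t).edges
      = (List.range k).map
          (fun i => s(vert n (by omega) (t + i), vert n (by omega) (t + i + 1))) := by
  intro k
  induction k with
  | zero => intro t; simp [wAux]
  | succ k ih =>
    intro t
    rw [wAux, SimpleGraph.Walk.edges_cons, SimpleGraph.Walk.edges_copy, ih]
    rw [List.range_succ_eq_map (n := k), List.map_cons, List.map_map]
    congr 1
    apply List.map_congr_left
    intro i _
    simp only [Function.comp_apply, Nat.succ_eq_add_one]
    rw [show t + 1 + i = t + (i + 1) from by omega]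

theorem ham {n : ℕ} (h13 : 13 ≤ n) (h6 : n % 6 = 1) (hp : Nat.Prime (2 * n + 11))
    (hq : Nat.Prime (2 * n + 23)) :
    ∃ a, ∃ w : (primeSumGraph (2 * n)).Walk a a, w.IsHamiltonianCycle ∧
      ∀ u v : Finset.Icc 1 (2 * n), s(u, v) ∈ w.edges →
        u.1 + v.1 ∈ ({11, 23, 2 * n + 11, 2 * n + 23} : Set ℕ) := by
  have hn : 0 < n := by omega
  have hend : vert n hn (0 + 2 * n) = vert n hn 0 := by
    rw [Nat.zero_add]; exact vert_period hn
  set W := (wAux h13 hp hq (2 * n) 0).copy rfl hend with hW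
  have hsupp : W.support = (List.range (2 * n + 1)).map (fun i => vert n hn i) := by
    rw [hW, SimpleGraph.Walk.support_copy, support_wAux]
    apply List.map_congr_left
    intro i _
    exact congrArg _ (Nat.zero_add i)
  have hedge : W.edges = (List.range (2 * n)).map (fun i => s(vert n hn i, vert n hn (i + 1))) := by
    rw [hW, SimpleGraph.Walk.edges_copy, edges_wAux]
    apply List.map_congr_left
    intro i _
    rw [Nat.zero_add]
  have htail : W.support.tail = (List.range (2 * n)).map (fun i => vert n hn (i + 1)) := by
    rw [hsupp, List.range_succ_eq_map, List.map_cons, List.tail_cons, List.map_map]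
    apply List.map_congr_left
    intro i _
    simp [Function.comp, Nat.succ_eq_add_one]
  have hnodup : W.support.tail.Nodup := by
    rw [htail]
    refine List.Nodup.map_on ?_ List.nodup_range
    intro x hx y hy hxy
    rw [List.mem_range] at hx hy
    rcases eq_or_lt_of_le (show x + 1 ≤ 2 * n from hx) with hx2 | hx2 <;>
      rcases eq_or_lt_of_le (show y + 1 ≤ 2 * n from hy) with hy2 | hy2
    · omega
    · exfalso
      rw [hx2, vert_period hn] at hxy
      have : 0 = y + 1 := vert_inj h6 (by omega) hy2 hxy
      omega
    · exfalso
      rw [hy2, vert_period hn] at hxy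
      have : x + 1 = 0 := vert_inj h6 hx2 (by omega) hxy
      omega
    · have := vert_inj h6 hx2 hy2 hxy
      omega
  have hcount : ∀ a, @List.count _ instBEqOfDecidableEq a W.support.tail = 1 := by
    intro a
    apply @List.count_eq_one_of_mem _ instBEqOfDecidableEq _ _ _ hnodup
    rw [htail, List.mem_map]
    obtain ⟨t, htlt, hteq⟩ := vert_surj h6 a
    rcases Nat.eq_zero_or_pos t with rfl | htpos
    · refine ⟨2 * n - 1, by rw [List.mem_range]; omega, ?_⟩
      rw [show 2 * n - 1 + 1 = 2 * n from by omega, vert_period hn]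
      exact hteq
    · refine ⟨t - 1, by rw [List.mem_range]; omega, ?_⟩
      rw [show t - 1 + 1 = t from by omega]
      exact hteq
  have hed : W.edges.Nodup := by
    rw [hedge]
    refine List.Nodup.map_on ?_ List.nodup_range
    intro x hx y hy hxy
    rw [List.mem_range] at hx hy
    rcases Sym2.eq_iff.mp hxy with ⟨h1, h2⟩ | ⟨h1, h2⟩
    · exact vert_inj h6 hx hy h1
    · exfalso
      rcases eq_or_lt_of_le (show y + 1 ≤ 2 * n from hy) with hy2 | hy2
      · rw [hy2, vert_period hn] at h1
        have hx0 : x = 0 := vert_inj h6 hx (by omega) h1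
        subst hx0
        have : 0 + 1 = y := by
          rcases eq_or_lt_of_le (show (0:ℕ) + 1 ≤ 2 * n from by omega)
            with h' | h'
          · omega
          · exact vert_inj h6 h' hy h2
        omega
      · have hxy1 : x = y + 1 := vert_inj h6 hx hy2 h1
        rcases eq_or_lt_of_le (show x + 1 ≤ 2 * n from hx) with hx2 | hx2
        · rw [hx2, vert_period hn] at h2
          have : 0 = y := vert_inj h6 (by omega) hy h2
          omega
        · have : x + 1 = y := vert_inj h6 hx2 hy h2
          omega
  have hlen : W.support.length = 2 * n + 1 := by rw [hsupp]; simp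
  have hnnil : W ≠ SimpleGraph.Walk.nil := by
    intro hWn
    rw [hWn, SimpleGraph.Walk.support_nil] at hlen
    simp at hlen
    omega
  refine ⟨vert n hn 0, W, ?_, ?_⟩
  · rw [SimpleGraph.Walk.isHamiltonianCycle_iff_isCycle_and_support_count_tail_eq_one]
    refine ⟨?_, hcount⟩
    rw [SimpleGraph.Walk.isCycle_def]
    exact ⟨⟨hed⟩, hnnil, hnodup⟩
  · intro u v huv
    rw [hedge, List.mem_map] at huv
    obtain ⟨i, hi, hieq⟩ := huv
    rcases Sym2.eq_iff.mp hieq with ⟨h1, h2⟩ | ⟨h1, h2⟩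
    · rw [← h1, ← h2]
      exact sum_lab h13 i
    · rw [← h1, ← h2]
      have := sum_lab h13 i
      rwa [Nat.add_comm (lab n (zf n i))] at this

end PSGHelper

/-- If there are infinitely many primes `p ≡ 1 (mod 12)` with `p + 12` also prime,
then there are infinitely many positive integers `n` (namely `n = (p - 11)/2` for
such primes `p > 23`) such that `G_{2n}` contains a Hamilton cycle whose
adjacent-vertex sums all lie in `{11, 23, p, p + 12}`. -/
theorem infinitely_many_hamiltonian_of_primes_one_mod_twelve
    (h : {p : ℕ | Nat.Prime p ∧ p % 12 = 1 ∧ Nat.Prime (p + 12)}.Infinite) :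
    {n : ℕ | 0 < n ∧ ∃ p : ℕ, Nat.Prime p ∧ p % 12 = 1 ∧ Nat.Prime (p + 12) ∧
      23 < p ∧ n = (p - 11) / 2 ∧
      ∃ a, ∃ w : (primeSumGraph (2 * n)).Walk a a, w.IsHamiltonianCycle ∧
        ∀ u v : Finset.Icc 1 (2 * n), s(u, v) ∈ w.edges →
          u.1 + v.1 ∈ ({11, 23, p, p + 12} : Set ℕ)}.Infinite := by
  have hS : {p : ℕ | Nat.Prime p ∧ p % 12 = 1 ∧ Nat.Prime (p + 12) ∧ 23 < p}.Infinite := by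
    apply Set.Infinite.mono ?_ (h.diff (Set.finite_Iic 23))
    rintro p ⟨⟨h1, h2, h3⟩, h4⟩
    exact ⟨h1, h2, h3, by simpa using h4⟩
  have hinj : Set.InjOn (fun p => (p - 11) / 2)
      {p : ℕ | Nat.Prime p ∧ p % 12 = 1 ∧ Nat.Prime (p + 12) ∧ 23 < p} := by
    rintro p ⟨_, hp2, _, hp4⟩ q ⟨_, hq2, _, hq4⟩ hpq
    simp only at hpq
    omega
  apply Set.Infinite.mono ?_ (hS.image hinj)
  rintro x ⟨p, ⟨hp1, hp2, hp3, hp4⟩, rfl⟩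
  simp only [Set.mem_setOf_eq]
  have hp37 : 37 ≤ p := by
    have : p ≠ 25 := by intro hh; rw [hh] at hp1; norm_num at hp1
    omega
  refine ⟨by omega, p, hp1, hp2, hp3, hp4, rfl, ?_⟩
  have h13 : 13 ≤ (p - 11) / 2 := by omega
  have h6 : (p - 11) / 2 % 6 = 1 := by omega
  have hpeq : 2 * ((p - 11) / 2) + 11 = p := by omega
  have hqeq : 2 * ((p - 11) / 2) + 23 = p + 12 := by omega
  obtain ⟨a, w, hw, hsum⟩ := PSGHelper.ham h13 h6 (by rw [hpeq]; exact hp1)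
    (by rw [hqeq]; exact hp3)
  refine ⟨a, w, hw, ?_⟩
  intro u v huv
  have := hsum u v huv
  rwa [hpeq, hqeq] at this
end
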